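/- Let G be a directed graph with edge set E = P ∪ F, and let u, v be vertices. Let V(F) be the set of endpoints of edges in F. Define H to be the directed graph on vertex set V(F) ∪ {u, v} with an edge (a, b) whenever (a, b) ∈ E with a, b ∈ V(F) ∪ {u, v}, or b is reachable from a using only edges of P. Then v is reachable from u in G if and only if v is reachable from u in H. -/

import Mathlib

/-- Let `G` be a directed graph with edge relation `E = P ∪ F` (where `P` is the set of
'permanent' edges and `F = E \ P`), and let `u, v` be vertices.  Let `V(F)` be the set of
endpoints of edges in `F`.  Let `H` be the directed graph on the vertices
`V(F) ∪ {u, v}` with an edge `(a, b)` whenever `(a, b) ∈ E`, or `b` is reachable from `a`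
using only edges of `P`.  Then `v` is reachable from `u` in `G` iff `v` is reachable from
`u` in `H`. -/
theorem stmt15 {V : Type*} (E P F : V → V → Prop) (u v : V)
    (hPE : ∀ a b, P a b → E a b)
    (hF : ∀ a b, F a b ↔ E a b ∧ ¬ P a b) :
    Relation.ReflTransGen E u v ↔
      Relation.ReflTransGen (fun a b =>
        a ∈ ({w | ∃ z, F w z ∨ F z w} : Set V) ∪ {u, v} ∧
        b ∈ ({w | ∃ z, F w z ∨ F z w} : Set V) ∪ {u, v} ∧
        (E a b ∨ Relation.ReflTransGen P a b)) u v := by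
  set S : Set V := ({w | ∃ z, F w z ∨ F z w} : Set V) ∪ {u, v} with hS
  set H : V → V → Prop := fun a b => a ∈ S ∧ b ∈ S ∧
      (E a b ∨ Relation.ReflTransGen P a b) with hH
  constructor
  · intro h
    have key : ∀ x, Relation.ReflTransGen E u x →
        ∃ y, Relation.ReflTransGen H u y ∧ y ∈ S ∧ Relation.ReflTransGen P y x := by
      intro x hx
      induction hx with
      | refl => exact ⟨u, Relation.ReflTransGen.refl, Or.inr (Or.inl rfl),
          Relation.ReflTransGen.refl⟩
      | @tail b c hab hbc ih =>
        obtain ⟨y, hy, hyS, hyP⟩ := ih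
        by_cases hp : P b c
        · exact ⟨y, hy, hyS, hyP.tail hp⟩
        · have hFbc : F b c := (hF b c).mpr ⟨hbc, hp⟩
          have hbS : b ∈ S := Or.inl ⟨c, Or.inl hFbc⟩
          have hcS : c ∈ S := Or.inl ⟨b, Or.inr hFbc⟩
          refine ⟨c, ?_, hcS, Relation.ReflTransGen.refl⟩
          exact (hy.tail ⟨hyS, hbS, Or.inr hyP⟩).tail ⟨hbS, hcS, Or.inl hbc⟩
    obtain ⟨y, hy, hyS, hyP⟩ := key v h
    exact hy.tail ⟨hyS, Or.inr (Or.inr rfl), Or.inr hyP⟩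
  · intro h
    rw [hH] at h
    clear_value S
    clear hS
    induction h with
    | refl => exact Relation.ReflTransGen.refl
    | tail hab hbc ih =>
      rcases hbc.2.2 with he | hp
      · exact ih.tail he
      · exact ih.trans (Relation.ReflTransGen.mono hPE _ _ hp)
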